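/- arXiv:1704.00946 — 3 statements merged into one kernel-verified Lean document; each statement's English description precedes it below -/
import Mathlib

section
/- Let ℳ*_q(𝕏) denote the class of functions m: 𝕏 → ℝ^q of the form m(x) = Σ_{z=1}^{n} [π_z φ_p(x; μ_z, Σ_z) / Σ_{ζ=1}^{n} π_ζ φ_p(x; μ_ζ, Σ_ζ)] · a_z, where n ∈ ℕ, π_z > 0 with Σ_z π_z = 1, μ_z ∈ ℝ^p, Σ_z symmetric positive-definite, and a_z ∈ ℝ^q. If m₁, m₂ ∈ ℳ*_q(𝕏), then m₁ + m₂ ∈ ℳ*_q(𝕏). -/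
open scoped Matrix BigOperators
set_option maxHeartbeats 1000000

/-- The multivariate Gaussian density. -/
noncomputable def gaussPDF {ι : Type*} [Fintype ι] [DecidableEq ι] (μ : ι → ℝ)
    (S : Matrix ι ι ℝ) (x : ι → ℝ) : ℝ :=
  (Real.sqrt ((2 * Real.pi) ^ (Fintype.card ι) * S.det))⁻¹ *
    Real.exp (-(1 / 2) * ((x - μ) ⬝ᵥ (S⁻¹ *ᵥ (x - μ))))

/-- Membership in ℳ*_q(𝕏): Gaussian-gated mean functions with constant experts. -/
def MemMStar {p q : ℕ} (𝕏 : Set (Fin p → ℝ)) (m : (Fin p → ℝ) → Fin q → ℝ) : Prop :=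
  ∃ (n : ℕ) (π : Fin n → ℝ) (μ : Fin n → Fin p → ℝ)
    (S : Fin n → Matrix (Fin p) (Fin p) ℝ) (a : Fin n → Fin q → ℝ),
    0 < n ∧ (∀ z, 0 < π z) ∧ (∑ z, π z = 1) ∧ (∀ z, (S z).PosDef) ∧
    ∀ x ∈ 𝕏, m x = ∑ z, ((π z * gaussPDF (μ z) (S z) x) /
        (∑ ζ, π ζ * gaussPDF (μ ζ) (S ζ) x)) • a z

lemma gaussPDF_pos {ι : Type*} [Fintype ι] [DecidableEq ι] (μ : ι → ℝ)
    {S : Matrix ι ι ℝ} (hS : S.PosDef) (x : ι → ℝ) : 0 < gaussPDF μ S x := by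
  unfold gaussPDF
  have h1 : (0:ℝ) < (2 * Real.pi) ^ (Fintype.card ι) * S.det :=
    mul_pos (pow_pos (by positivity) _) hS.det_pos
  have h2 : 0 < Real.sqrt ((2 * Real.pi) ^ (Fintype.card ι) * S.det) := Real.sqrt_pos.mpr h1
  exact mul_pos (inv_pos.mpr h2) (Real.exp_pos _)

lemma quad_expand {ι : Type*} [Fintype ι] (B : Matrix ι ι ℝ) (hB : Bᵀ = B) (x μ : ι → ℝ) :
    (x - μ) ⬝ᵥ (B *ᵥ (x - μ)) = x ⬝ᵥ (B *ᵥ x) - 2 * (x ⬝ᵥ (B *ᵥ μ)) + μ ⬝ᵥ (B *ᵥ μ) := by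
  have h : μ ⬝ᵥ (B *ᵥ x) = x ⬝ᵥ (B *ᵥ μ) := by
    rw [Matrix.dotProduct_mulVec, ← Matrix.mulVec_transpose, hB, dotProduct_comm]
  simp only [Matrix.mulVec_sub, dotProduct_sub, sub_dotProduct, h]
  ring

lemma gauss_prod {ι : Type*} [Fintype ι] [DecidableEq ι]
    (μ₁ μ₂ : ι → ℝ) {S₁ S₂ : Matrix ι ι ℝ} (h₁ : S₁.PosDef) (h₂ : S₂.PosDef) :
    ∃ (c : ℝ) (μ : ι → ℝ) (S : Matrix ι ι ℝ), 0 < c ∧ S.PosDef ∧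
      ∀ x, gaussPDF μ₁ S₁ x * gaussPDF μ₂ S₂ x = c * gaussPDF μ S x := by
  set B₁ := S₁⁻¹ with hB₁def
  set B₂ := S₂⁻¹ with hB₂def
  have hB₁ : B₁.PosDef := h₁.inv
  have hB₂ : B₂.PosDef := h₂.inv
  set A := B₁ + B₂ with hA
  have hApd : A.PosDef := hB₁.add hB₂
  set μ := A⁻¹ *ᵥ (B₁ *ᵥ μ₁ + B₂ *ᵥ μ₂) with hμ
  have hAinv : A⁻¹⁻¹ = A := Matrix.nonsing_inv_nonsing_inv A hApd.det_pos.ne'.isUnit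
  have hAμ : A *ᵥ μ = B₁ *ᵥ μ₁ + B₂ *ᵥ μ₂ := by
    rw [hμ, Matrix.mulVec_mulVec, Matrix.mul_nonsing_inv A hApd.det_pos.ne'.isUnit,
      Matrix.one_mulVec]
  set k : ℝ := μ₁ ⬝ᵥ (B₁ *ᵥ μ₁) + μ₂ ⬝ᵥ (B₂ *ᵥ μ₂) - μ ⬝ᵥ (A *ᵥ μ) with hk
  have key : ∀ x, (x - μ₁) ⬝ᵥ (B₁ *ᵥ (x - μ₁)) + (x - μ₂) ⬝ᵥ (B₂ *ᵥ (x - μ₂))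
      = (x - μ) ⬝ᵥ (A *ᵥ (x - μ)) + k := by
    intro x
    rw [quad_expand B₁ hB₁.isHermitian.eq, quad_expand B₂ hB₂.isHermitian.eq,
        quad_expand A hApd.isHermitian.eq]
    have e1 : x ⬝ᵥ (A *ᵥ x) = x ⬝ᵥ (B₁ *ᵥ x) + x ⬝ᵥ (B₂ *ᵥ x) := by
      rw [hA, Matrix.add_mulVec, dotProduct_add]
    have e2 : x ⬝ᵥ (A *ᵥ μ) = x ⬝ᵥ (B₁ *ᵥ μ₁) + x ⬝ᵥ (B₂ *ᵥ μ₂) := by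
      rw [hAμ, dotProduct_add]
    rw [e1, e2, hk]; ring
  have hN : (0:ℝ) < Real.sqrt ((2 * Real.pi) ^ (Fintype.card ι) * (A⁻¹).det) :=
    Real.sqrt_pos.mpr (mul_pos (pow_pos (by positivity) _) hApd.inv.det_pos)
  have hN₁ : (0:ℝ) < Real.sqrt ((2 * Real.pi) ^ (Fintype.card ι) * S₁.det) :=
    Real.sqrt_pos.mpr (mul_pos (pow_pos (by positivity) _) h₁.det_pos)
  have hN₂ : (0:ℝ) < Real.sqrt ((2 * Real.pi) ^ (Fintype.card ι) * S₂.det) :=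
    Real.sqrt_pos.mpr (mul_pos (pow_pos (by positivity) _) h₂.det_pos)
  refine ⟨(Real.sqrt ((2 * Real.pi) ^ (Fintype.card ι) * S₁.det))⁻¹ *
      (Real.sqrt ((2 * Real.pi) ^ (Fintype.card ι) * S₂.det))⁻¹ *
      Real.sqrt ((2 * Real.pi) ^ (Fintype.card ι) * (A⁻¹).det) * Real.exp (-(1/2) * k),
    μ, A⁻¹, by positivity, hApd.inv, ?_⟩
  intro x
  unfold gaussPDF
  rw [hAinv]
  have hexp : Real.exp (-(1/2) * ((x - μ₁) ⬝ᵥ (B₁ *ᵥ (x - μ₁)))) *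
      Real.exp (-(1/2) * ((x - μ₂) ⬝ᵥ (B₂ *ᵥ (x - μ₂))))
      = Real.exp (-(1/2) * k) * Real.exp (-(1/2) * ((x - μ) ⬝ᵥ (A *ᵥ (x - μ)))) := by
    rw [← Real.exp_add, ← Real.exp_add]
    congr 1
    have := key x
    linarith
  rw [mul_mul_mul_comm, hexp]
  set N₁ := Real.sqrt ((2 * Real.pi) ^ (Fintype.card ι) * S₁.det)
  set N₂ := Real.sqrt ((2 * Real.pi) ^ (Fintype.card ι) * S₂.det)
  set N := Real.sqrt ((2 * Real.pi) ^ (Fintype.card ι) * (A⁻¹).det)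
  set Ek := Real.exp (-(1/2) * k)
  set E := Real.exp (-(1/2) * ((x - μ) ⬝ᵥ (A *ᵥ (x - μ))))
  rw [show N₁⁻¹ * N₂⁻¹ * N * Ek * (N⁻¹ * E) = N₁⁻¹ * N₂⁻¹ * (Ek * E) * (N * N⁻¹) by ring,
    mul_inv_cancel₀ hN.ne', mul_one]

lemma weight_eq (a b cc φc φ₁ φ₂ C D₁ D₂ : ℝ) (hC : C ≠ 0)
    (h : φ₁ * φ₂ = cc * φc) :
    a * b * cc / C * φc / (D₁ * D₂ / C) = (a * φ₁ / D₁) * (b * φ₂ / D₂) := by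
  rw [div_mul_eq_mul_div, div_div_eq_mul_div, div_mul_cancel₀ _ hC,
    mul_assoc (a * b) cc φc, ← h, div_mul_div_comm]
  ring

lemma double_sum_combine {n₁ n₂ : ℕ} (w₁ : Fin n₁ → ℝ) (w₂ : Fin n₂ → ℝ)
    (A : Fin n₁ → ℝ) (B : Fin n₂ → ℝ) (h₁ : ∑ z, w₁ z = 1) (h₂ : ∑ ζ, w₂ ζ = 1) :
    ∑ z, ∑ ζ, (w₁ z * w₂ ζ) * (A z + B ζ) = ∑ z, w₁ z * A z + ∑ ζ, w₂ ζ * B ζ := by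
  have hin : ∀ z, ∑ ζ, (w₁ z * w₂ ζ) * (A z + B ζ)
      = w₁ z * A z + w₁ z * ∑ ζ, w₂ ζ * B ζ := fun z => by
    calc ∑ ζ, (w₁ z * w₂ ζ) * (A z + B ζ)
        = ∑ ζ, (w₁ z * A z * w₂ ζ + w₁ z * (w₂ ζ * B ζ)) :=
          Finset.sum_congr rfl (fun ζ _ => by ring)
      _ = w₁ z * A z * (∑ ζ, w₂ ζ) + w₁ z * ∑ ζ, w₂ ζ * B ζ := by
          rw [Finset.sum_add_distrib, ← Finset.mul_sum, ← Finset.mul_sum]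
      _ = w₁ z * A z + w₁ z * ∑ ζ, w₂ ζ * B ζ := by rw [h₂, mul_one]
  calc ∑ z, ∑ ζ, (w₁ z * w₂ ζ) * (A z + B ζ)
      = ∑ z, (w₁ z * A z + w₁ z * ∑ ζ, w₂ ζ * B ζ) := Finset.sum_congr rfl (fun z _ => hin z)
    _ = ∑ z, w₁ z * A z + (∑ z, w₁ z) * ∑ ζ, w₂ ζ * B ζ := by
        rw [Finset.sum_add_distrib, ← Finset.sum_mul]
    _ = _ := by rw [h₁, one_mul]

theorem memMStar_add {p q : ℕ} (𝕏 : Set (Fin p → ℝ))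
    (m₁ m₂ : (Fin p → ℝ) → Fin q → ℝ)
    (h₁ : MemMStar 𝕏 m₁) (h₂ : MemMStar 𝕏 m₂) :
    MemMStar 𝕏 (m₁ + m₂) := by
  obtain ⟨n₁, π₁, μ₁, S₁, a₁, hn₁, hπ₁, hsum₁, hS₁, hm₁⟩ := h₁
  obtain ⟨n₂, π₂, μ₂, S₂, a₂, hn₂, hπ₂, hsum₂, hS₂, hm₂⟩ := h₂
  choose c μc Sc hc hScpd hprod using fun (z : Fin n₁) (ζ : Fin n₂) =>
    gauss_prod (μ₁ z) (μ₂ ζ) (hS₁ z) (hS₂ ζ)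
  haveI : Nonempty (Fin n₁) := Fin.pos_iff_nonempty.mp hn₁
  haveI : Nonempty (Fin n₂) := Fin.pos_iff_nonempty.mp hn₂
  set C : ℝ := ∑ z, ∑ ζ, π₁ z * π₂ ζ * c z ζ with hCdef
  have hCpos : 0 < C := Finset.sum_pos (fun z _ => Finset.sum_pos
    (fun ζ _ => mul_pos (mul_pos (hπ₁ z) (hπ₂ ζ)) (hc z ζ)) Finset.univ_nonempty)
    Finset.univ_nonempty
  set e : Fin n₁ × Fin n₂ ≃ Fin (n₁ * n₂) := finProdFinEquiv with he
  refine ⟨n₁ * n₂,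
    fun i => π₁ (e.symm i).1 * π₂ (e.symm i).2 * c (e.symm i).1 (e.symm i).2 / C,
    fun i => μc (e.symm i).1 (e.symm i).2,
    fun i => Sc (e.symm i).1 (e.symm i).2,
    fun i => a₁ (e.symm i).1 + a₂ (e.symm i).2,
    Nat.mul_pos hn₁ hn₂,
    fun i => div_pos (mul_pos (mul_pos (hπ₁ _) (hπ₂ _)) (hc _ _)) hCpos,
    ?_, fun i => hScpd _ _, ?_⟩
  · calc (∑ i, π₁ (e.symm i).1 * π₂ (e.symm i).2 * c (e.symm i).1 (e.symm i).2 / C)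
        = ∑ pr : Fin n₁ × Fin n₂, π₁ pr.1 * π₂ pr.2 * c pr.1 pr.2 / C :=
          Equiv.sum_comp e.symm (fun pr => π₁ pr.1 * π₂ pr.2 * c pr.1 pr.2 / C)
      _ = (∑ z, ∑ ζ, π₁ z * π₂ ζ * c z ζ) / C := by
          rw [Fintype.sum_prod_type, Finset.sum_div]
          exact Finset.sum_congr rfl fun z _ => (Finset.sum_div _ _ _).symm
      _ = 1 := div_self hCpos.ne'
  · intro x hx
    set D₁ : ℝ := ∑ z, π₁ z * gaussPDF (μ₁ z) (S₁ z) x with hD₁def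
    set D₂ : ℝ := ∑ ζ, π₂ ζ * gaussPDF (μ₂ ζ) (S₂ ζ) x with hD₂def
    have hD₁ : 0 < D₁ := Finset.sum_pos
      (fun z _ => mul_pos (hπ₁ z) (gaussPDF_pos _ (hS₁ z) x)) Finset.univ_nonempty
    have hD₂ : 0 < D₂ := Finset.sum_pos
      (fun ζ _ => mul_pos (hπ₂ ζ) (gaussPDF_pos _ (hS₂ ζ) x)) Finset.univ_nonempty
    -- the new denominator
    have hden : (∑ i, π₁ (e.symm i).1 * π₂ (e.symm i).2 * c (e.symm i).1 (e.symm i).2 / C *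
        gaussPDF (μc (e.symm i).1 (e.symm i).2) (Sc (e.symm i).1 (e.symm i).2) x)
        = D₁ * D₂ / C := by
      calc (∑ i, π₁ (e.symm i).1 * π₂ (e.symm i).2 * c (e.symm i).1 (e.symm i).2 / C *
            gaussPDF (μc (e.symm i).1 (e.symm i).2) (Sc (e.symm i).1 (e.symm i).2) x)
          = ∑ pr : Fin n₁ × Fin n₂, π₁ pr.1 * π₂ pr.2 * c pr.1 pr.2 / C *
              gaussPDF (μc pr.1 pr.2) (Sc pr.1 pr.2) x :=
            Equiv.sum_comp e.symm (fun pr => π₁ pr.1 * π₂ pr.2 * c pr.1 pr.2 / C *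
              gaussPDF (μc pr.1 pr.2) (Sc pr.1 pr.2) x)
        _ = ∑ z, ∑ ζ, (π₁ z * gaussPDF (μ₁ z) (S₁ z) x) * (π₂ ζ * gaussPDF (μ₂ ζ) (S₂ ζ) x) / C := by
            rw [Fintype.sum_prod_type]
            refine Finset.sum_congr rfl fun z _ => Finset.sum_congr rfl fun ζ _ => ?_
            rw [div_mul_eq_mul_div, mul_assoc, ← hprod z ζ x]
            ring
        _ = D₁ * D₂ / C := by
            rw [hD₁def, hD₂def, Finset.sum_mul_sum, Finset.sum_div]
            exact Finset.sum_congr rfl fun z _ => (Finset.sum_div _ _ _).symm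
    rw [Pi.add_apply, hm₁ x hx, hm₂ x hx]
    funext j
    simp only [Finset.sum_apply, Pi.add_apply, Pi.smul_apply, smul_eq_mul]
    rw [hden]
    calc (∑ z, π₁ z * gaussPDF (μ₁ z) (S₁ z) x / D₁ * a₁ z j) +
          ∑ ζ, π₂ ζ * gaussPDF (μ₂ ζ) (S₂ ζ) x / D₂ * a₂ ζ j
        = ∑ z, ∑ ζ, ((π₁ z * gaussPDF (μ₁ z) (S₁ z) x / D₁) *
            (π₂ ζ * gaussPDF (μ₂ ζ) (S₂ ζ) x / D₂)) * (a₁ z j + a₂ ζ j) := by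
          rw [double_sum_combine]
          · rw [← Finset.sum_div, div_self hD₁.ne']
          · rw [← Finset.sum_div, div_self hD₂.ne']
      _ = ∑ pr : Fin n₁ × Fin n₂, π₁ pr.1 * π₂ pr.2 * c pr.1 pr.2 / C *
            gaussPDF (μc pr.1 pr.2) (Sc pr.1 pr.2) x / (D₁ * D₂ / C) *
            (a₁ pr.1 j + a₂ pr.2 j) := by
          rw [Fintype.sum_prod_type]
          refine Finset.sum_congr rfl fun z _ => Finset.sum_congr rfl fun ζ _ => ?_
          congr 1
          exact (weight_eq _ _ _ _ _ _ _ _ _ hCpos.ne' (hprod z ζ x)).symm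
      _ = ∑ i, π₁ (e.symm i).1 * π₂ (e.symm i).2 * c (e.symm i).1 (e.symm i).2 / C *
            gaussPDF (μc (e.symm i).1 (e.symm i).2) (Sc (e.symm i).1 (e.symm i).2) x /
            (D₁ * D₂ / C) * (a₁ (e.symm i).1 j + a₂ (e.symm i).2 j) :=
          (Equiv.sum_comp e.symm _).symm
end

section
/- Let 𝕏 ⊂ ℝ^p be a compact set and q ∈ ℕ. The class ℳ*_q(𝕏) of Gaussian-gated constant-expert mean functions m(x) = Σ_{z=1}^{n} [π_z φ_p(x; μ_z, Σ_z) / Σ_{ζ} π_ζ φ_p(x; μ_ζ, Σ_ζ)]·a_z is fundamental in C_q(𝕏), the space of continuous functions 𝕏 → ℝ^q, with respect to the induced norm ‖u‖_{q,∞} = Σ_{j=1}^q sup_{x∈𝕏}|u_j(x)|. That is, for every continuous u: 𝕏 → ℝ^q and every ε > 0, there exists m ∈ ℳ*_q(𝕏) with ‖m − u‖_{q,∞} < ε. -/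
open scoped Matrix BigOperators

lemma smul_one_posDef {p : ℕ} {s : ℝ} (hs : 0 < s) :
    Matrix.PosDef (s • (1 : Matrix (Fin p) (Fin p) ℝ)) := by
  refine Matrix.posDef_iff_dotProduct_mulVec.mpr ⟨?_, ?_⟩
  · unfold Matrix.IsHermitian; simp
  · intro x hx
    have h1 : (s • (1 : Matrix (Fin p) (Fin p) ℝ)) *ᵥ x = s • x := by
      rw [Matrix.smul_mulVec, Matrix.one_mulVec]
    rw [h1]
    have h2 : star x ⬝ᵥ (s • x) = s * (x ⬝ᵥ x) := by
      simp [dotProduct_smul, star_trivial]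
    rw [h2]
    have hxx : 0 < x ⬝ᵥ x := by
      have h0 : 0 ≤ x ⬝ᵥ x := Finset.sum_nonneg fun i _ => mul_self_nonneg _
      rcases h0.lt_or_eq with h | h
      · exact h
      · exact absurd ((dotProduct_self_eq_zero).mp h.symm) hx
    positivity

lemma gauss_smul_one {p : ℕ} {s : ℝ} (hs : 0 < s) (μ x : Fin p → ℝ) :
    gaussPDF μ (s • (1 : Matrix (Fin p) (Fin p) ℝ)) x =
      (Real.sqrt ((2 * Real.pi) ^ p * s ^ p))⁻¹ *
        Real.exp (-(((x - μ) ⬝ᵥ (x - μ)) / (2 * s))) := by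
  have hinv : (s • (1 : Matrix (Fin p) (Fin p) ℝ))⁻¹ = s⁻¹ • 1 := by
    apply Matrix.inv_eq_right_inv
    rw [Matrix.smul_mul, Matrix.mul_smul, one_mul, smul_smul, mul_inv_cancel₀ hs.ne', one_smul]
  have hdet : (s • (1 : Matrix (Fin p) (Fin p) ℝ)).det = s ^ p := by
    rw [Matrix.det_smul, Matrix.det_one, mul_one, Fintype.card_fin]
  have hmv : (s⁻¹ • (1 : Matrix (Fin p) (Fin p) ℝ)) *ᵥ (x - μ) = s⁻¹ • (x - μ) := by
    rw [Matrix.smul_mulVec, Matrix.one_mulVec]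
  unfold gaussPDF
  rw [hinv, hdet, hmv, Fintype.card_fin]
  congr 1
  rw [dotProduct_smul]
  have h3 : -(1/2 : ℝ) * (s⁻¹ • ((x - μ) ⬝ᵥ (x - μ))) = -(((x - μ) ⬝ᵥ (x - μ)) / (2 * s)) := by
    simp only [smul_eq_mul]
    field_simp
  rw [h3]

lemma aux_mul1 (d s : ℝ) (hs : 0 < s) : -(d / (8 * s)) * (2 * s) = -(d / 4) := by
  field_simp
  ring

lemma aux_final (ε δ M nn qq : ℝ) (hε : 0 < ε) (hδ : 0 < δ) (hM : 0 < M)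
    (hn : 0 < nn) (hq : 0 < qq) :
    ε / (4 * qq) + nn * (8 * (ε * δ ^ 2 / (64 * M * nn * qq)) / δ ^ 2 * (2 * M))
      = ε / (2 * qq) := by
  field_simp
  ring

set_option maxHeartbeats 2000000 in
theorem memMStar_fundamental {p q : ℕ} (hq : 0 < q)
    (𝕏 : Set (Fin p → ℝ)) (hX : IsCompact 𝕏) (hXne : 𝕏.Nonempty)
    (u : (Fin p → ℝ) → Fin q → ℝ) (hu : ∀ j : Fin q, ContinuousOn (fun x => u x j) 𝕏)
    (ε : ℝ) (hε : 0 < ε) :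
    ∃ m : (Fin p → ℝ) → Fin q → ℝ, MemMStar 𝕏 m ∧
      (∑ j : Fin q, ⨆ x : 𝕏, |m x j - u x j|) < ε := by
  have hqR : (0:ℝ) < q := Nat.cast_pos.mpr hq
  -- bound on u
  have huC : ContinuousOn u 𝕏 := continuousOn_pi.mpr hu
  obtain ⟨C, hC⟩ := hX.exists_bound_of_continuousOn huC
  set M : ℝ := max C 1 with hMdef
  have hM0 : (0:ℝ) < M := lt_of_lt_of_le one_pos (le_max_right _ _)
  have hMb : ∀ x ∈ 𝕏, ∀ j, |u x j| ≤ M := by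
    intro x hx j
    calc |u x j| = ‖u x j‖ := rfl
    _ ≤ ‖u x‖ := norm_le_pi_norm (u x) j
    _ ≤ C := hC x hx
    _ ≤ M := le_max_left _ _
  -- ε'
  set ε' : ℝ := ε / (4 * q) with hε'def
  have hε' : 0 < ε' := div_pos hε (mul_pos (by norm_num) hqR)
  -- uniform continuity
  obtain ⟨δ, hδ, hδu⟩ := Metric.uniformContinuousOn_iff.mp
    (hX.uniformContinuousOn_of_continuous huC) ε' hε'
  -- cover
  set ρ : ℝ := δ / (2 * Real.sqrt (p + 1)) with hρdef
  have hsqrtpos : 0 < Real.sqrt (p + 1) := Real.sqrt_pos.mpr (by positivity)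
  have hρ : 0 < ρ := div_pos hδ (mul_pos (by norm_num) hsqrtpos)
  obtain ⟨t, htX, htcov⟩ := hX.elim_nhds_subcover (fun c => Metric.ball c ρ)
    (fun x _ => Metric.ball_mem_nhds x hρ)
  have htne : t.Nonempty := by
    obtain ⟨x0, hx0⟩ := hXne
    have h := htcov hx0
    simp only [Set.mem_iUnion] at h
    obtain ⟨c, hc, _⟩ := h
    exact ⟨c, hc⟩
  set n : ℕ := t.card with hndef
  have hn : 0 < n := Finset.card_pos.mpr htne
  have hnR : (0:ℝ) < n := Nat.cast_pos.mpr hn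
  haveI : Nonempty (Fin n) := ⟨⟨0, hn⟩⟩
  -- centers
  set μ : Fin n → (Fin p → ℝ) := fun z => (t.equivFin.symm z : Fin p → ℝ) with hμdef
  have hμX : ∀ z, μ z ∈ 𝕏 := fun z => htX _ (t.equivFin.symm z).2
  have hcov : ∀ x ∈ 𝕏, ∃ z : Fin n, dist x (μ z) < ρ := by
    intro x hx
    have h := htcov hx
    simp only [Set.mem_iUnion, Metric.mem_ball] at h
    obtain ⟨c, hc, hdist⟩ := h
    refine ⟨t.equivFin ⟨c, hc⟩, ?_⟩
    simp only [hμdef, Equiv.symm_apply_apply]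
    exact hdist
  -- bandwidth
  set s : ℝ := ε * δ ^ 2 / (64 * M * n * q) with hsdef
  have hs : 0 < s := div_pos (mul_pos hε (pow_pos hδ 2))
    (mul_pos (mul_pos (mul_pos (by norm_num) hM0) hnR) hqR)
  -- quadratic form and exponentials
  set Q : Fin n → (Fin p → ℝ) → ℝ := fun z x => (x - μ z) ⬝ᵥ (x - μ z) with hQdef
  have hQnonneg : ∀ z x, 0 ≤ Q z x := fun z x =>
    Finset.sum_nonneg fun i _ => mul_self_nonneg _
  set e : Fin n → (Fin p → ℝ) → ℝ := fun z x => Real.exp (-(Q z x / (2 * s))) with hedef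
  have hepos : ∀ z x, 0 < e z x := fun z x => Real.exp_pos _
  set Se : (Fin p → ℝ) → ℝ := fun x => ∑ ζ, e ζ x with hSedef
  have hSepos : ∀ x, 0 < Se x := fun x => Finset.sum_pos (fun ζ _ => hepos ζ x)
    Finset.univ_nonempty
  have hSele : ∀ z x, e z x ≤ Se x := fun z x =>
    Finset.single_le_sum (fun ζ _ => (hepos ζ x).le) (Finset.mem_univ z)
  -- the candidate
  set a : Fin n → Fin q → ℝ := fun z => u (μ z) with hadef
  set m : (Fin p → ℝ) → Fin q → ℝ := fun x => ∑ z, (e z x / Se x) • a z with hmdef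
  set K : ℝ := 8 * s / δ ^ 2 * (2 * M) with hKdef
  have hK0 : 0 ≤ K := mul_nonneg (div_nonneg (by linarith) (sq_nonneg δ)) (by linarith)
  refine ⟨m, ?_, ?_⟩
  · -- membership
    have hπsum : ∑ _z : Fin n, (n:ℝ)⁻¹ = 1 := by
      rw [Finset.sum_const, Finset.card_univ, Fintype.card_fin, nsmul_eq_mul,
        mul_inv_cancel₀ hnR.ne']
    refine ⟨n, fun _ => (n:ℝ)⁻¹, μ, fun _ => s • 1, a, hn,
      fun _ => inv_pos.mpr hnR, hπsum, fun _ => smul_one_posDef hs, ?_⟩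
    intro x hx
    have hgauss : ∀ z : Fin n, gaussPDF (μ z) (s • (1 : Matrix (Fin p) (Fin p) ℝ)) x =
        (Real.sqrt ((2 * Real.pi) ^ p * s ^ p))⁻¹ * e z x := fun z => gauss_smul_one hs _ _
    have hCpos : (0:ℝ) < (Real.sqrt ((2 * Real.pi) ^ p * s ^ p))⁻¹ :=
      inv_pos.mpr (Real.sqrt_pos.mpr (mul_pos
        (pow_pos (by positivity : (0:ℝ) < 2 * Real.pi) p) (pow_pos hs p)))
    set G : ℝ := (Real.sqrt ((2 * Real.pi) ^ p * s ^ p))⁻¹ with hGdef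
    set D : ℝ := (n:ℝ)⁻¹ * G with hDdef
    have hD : D ≠ 0 := (mul_pos (inv_pos.mpr hnR) hCpos).ne'
    simp only [hmdef]
    apply Finset.sum_congr rfl
    intro z _
    congr 1
    have hden : ∑ ζ, (n:ℝ)⁻¹ * gaussPDF (μ ζ) (s • (1 : Matrix (Fin p) (Fin p) ℝ)) x
        = D * Se x := by
      rw [hSedef, Finset.mul_sum]
      refine Finset.sum_congr rfl fun ζ _ => ?_
      rw [hgauss ζ, hDdef]; ring
    rw [hden, hgauss z, show (n:ℝ)⁻¹ * (G * e z x) = D * e z x by rw [hDdef]; ring,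
      mul_div_mul_left _ _ hD]
  · -- the approximation bound
    have key : ∀ j : Fin q, ∀ x ∈ 𝕏, |m x j - u x j| ≤ ε / (2 * q) := by
      intro j x hx
      obtain ⟨z₀, hz₀⟩ := hcov x hx
      -- the nearest center has small Q
      have hQz₀ : Q z₀ x ≤ δ ^ 2 / 4 := by
        have h1 : ∀ i, (x i - μ z₀ i) * (x i - μ z₀ i) ≤ ρ ^ 2 := by
          intro i
          have h2 : dist (x i) (μ z₀ i) ≤ dist x (μ z₀) := dist_le_pi_dist x (μ z₀) i
          have h4 : |x i - μ z₀ i| < ρ := by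
            rw [← Real.dist_eq]; exact lt_of_le_of_lt h2 hz₀
          nlinarith [abs_nonneg (x i - μ z₀ i), sq_abs (x i - μ z₀ i),
            abs_nonneg (x i - μ z₀ i)]
        have hρsq : (p:ℝ) * ρ ^ 2 ≤ δ ^ 2 / 4 := by
          have : ρ ^ 2 = δ ^ 2 / (4 * ((p:ℝ) + 1)) := by
            rw [hρdef, div_pow, mul_pow, Real.sq_sqrt (by positivity : (0:ℝ) ≤ (p:ℝ) + 1)]
            ring
          rw [this, ← mul_div_assoc, div_le_div_iff₀ (by positivity) (by norm_num)]
          nlinarith [Nat.cast_nonneg (α := ℝ) p, sq_nonneg δ]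
        calc Q z₀ x = ∑ i, (x i - μ z₀ i) * (x i - μ z₀ i) := rfl
          _ ≤ ∑ _i : Fin p, ρ ^ 2 := Finset.sum_le_sum fun i _ => h1 i
          _ = (p:ℝ) * ρ ^ 2 := by rw [Finset.sum_const, Finset.card_univ, Fintype.card_fin,
                nsmul_eq_mul]
          _ ≤ δ ^ 2 / 4 := hρsq
      -- rewrite the difference
      have hsum1 : ∑ z, e z x / Se x = 1 := by
        rw [← Finset.sum_div]
        exact div_self (hSepos x).ne'
      have hval : m x j - u x j = ∑ z, (e z x / Se x) * (a z j - u x j) := by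
        have hmj : m x j = ∑ z, (e z x / Se x) * a z j := by
          show (∑ z, (e z x / Se x) • a z) j = _
          rw [Finset.sum_apply]
          rfl
        calc m x j - u x j = ∑ z, (e z x / Se x) * a z j
              - (∑ z, e z x / Se x) * u x j := by rw [hmj, hsum1, one_mul]
          _ = ∑ z, ((e z x / Se x) * a z j - (e z x / Se x) * u x j) := by
              rw [Finset.sum_sub_distrib, Finset.sum_mul]
          _ = ∑ z, (e z x / Se x) * (a z j - u x j) := by
              refine Finset.sum_congr rfl fun z _ => ?_; ring
      -- termwise bound
      have hterm : ∀ z : Fin n, (e z x / Se x) * |a z j - u x j|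
          ≤ (e z x / Se x) * ε' + K := by
        intro z
        have hgate0 : 0 ≤ e z x / Se x := le_of_lt (div_pos (hepos z x) (hSepos x))
        by_cases hclose : Q z x ≤ δ ^ 2 / 2
        · -- close case
          have hdxz : dist x (μ z) < δ := by
            rw [dist_pi_lt_iff hδ]
            intro i
            have hle : (x i - μ z i) * (x i - μ z i) ≤ Q z x :=
              Finset.single_le_sum (f := fun i => (x i - μ z i) * (x i - μ z i))
                (fun i _ => mul_self_nonneg _) (Finset.mem_univ i)
            rw [Real.dist_eq]
            nlinarith [abs_nonneg (x i - μ z i), sq_abs (x i - μ z i)]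
          have hdu : |a z j - u x j| ≤ ε' := by
            have h5 : dist (u x) (u (μ z)) < ε' := hδu x hx (μ z) (hμX z) hdxz
            have h6 : dist (u x j) (u (μ z) j) ≤ dist (u x) (u (μ z)) :=
              dist_le_pi_dist (u x) (u (μ z)) j
            have h7 : |u x j - u (μ z) j| < ε' := by
              rw [← Real.dist_eq]; exact lt_of_le_of_lt h6 h5
            rw [hadef, abs_sub_comm]
            exact h7.le
          calc (e z x / Se x) * |a z j - u x j| ≤ (e z x / Se x) * ε' :=
                mul_le_mul_of_nonneg_left hdu hgate0
            _ ≤ (e z x / Se x) * ε' + K := le_add_of_nonneg_right hK0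
        · -- far case
          push_neg at hclose
          have hgate : e z x / Se x ≤ 8 * s / δ ^ 2 := by
            have hb1 : e z x / Se x ≤ e z x / e z₀ x :=
              div_le_div_of_nonneg_left (hepos z x).le (hepos z₀ x) (hSele z₀ x)
            have hb2 : e z x / e z₀ x = Real.exp ((Q z₀ x - Q z x) / (2 * s)) := by
              show Real.exp (-(Q z x / (2 * s))) / Real.exp (-(Q z₀ x / (2 * s))) = _
              rw [← Real.exp_sub]
              congr 1
              ring
            have hb3 : (Q z₀ x - Q z x) / (2 * s) ≤ -(δ ^ 2 / (8 * s)) := by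
              rw [div_le_iff₀ (mul_pos two_pos hs), aux_mul1 _ _ hs]
              linarith
            have hb4 : Real.exp ((Q z₀ x - Q z x) / (2 * s)) ≤
                Real.exp (-(δ ^ 2 / (8 * s))) := Real.exp_le_exp.mpr hb3
            have hb5 : Real.exp (-(δ ^ 2 / (8 * s))) ≤ 8 * s / δ ^ 2 := by
              have hT : (0:ℝ) < δ ^ 2 / (8 * s) := div_pos (pow_pos hδ 2) (mul_pos (by norm_num) hs)
              have h8 : δ ^ 2 / (8 * s) ≤ Real.exp (δ ^ 2 / (8 * s)) := by
                linarith [Real.add_one_le_exp (δ ^ 2 / (8 * s))]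
              rw [Real.exp_neg, show 8 * s / δ ^ 2 = (δ ^ 2 / (8 * s))⁻¹ from (inv_div _ _).symm]
              exact inv_anti₀ hT h8
            calc e z x / Se x ≤ e z x / e z₀ x := hb1
              _ ≤ 8 * s / δ ^ 2 := by rw [hb2]; exact le_trans hb4 hb5
          have hdu2 : |a z j - u x j| ≤ 2 * M := by
            calc |a z j - u x j| ≤ |a z j| + |u x j| := abs_sub _ _
              _ ≤ M + M := add_le_add (hMb (μ z) (hμX z) j) (hMb x hx j)
              _ = 2 * M := by ring
          calc (e z x / Se x) * |a z j - u x j|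
              ≤ (8 * s / δ ^ 2) * (2 * M) := by
                apply mul_le_mul hgate hdu2 (abs_nonneg _) (div_nonneg (by linarith) (sq_nonneg δ))
            _ = K := hKdef.symm
            _ ≤ (e z x / Se x) * ε' + K := le_add_of_nonneg_left (mul_nonneg hgate0 hε'.le)
      -- sum the bounds
      have hbound : |m x j - u x j| ≤ ε' + n * K := by
        rw [hval]
        calc |∑ z, (e z x / Se x) * (a z j - u x j)|
            ≤ ∑ z, |(e z x / Se x) * (a z j - u x j)| := Finset.abs_sum_le_sum_abs _ _
          _ = ∑ z, (e z x / Se x) * |a z j - u x j| := by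
              refine Finset.sum_congr rfl fun z _ => ?_
              rw [abs_mul, abs_of_nonneg (le_of_lt (div_pos (hepos z x) (hSepos x)))]
          _ ≤ ∑ z, ((e z x / Se x) * ε' + K) := Finset.sum_le_sum fun z _ => hterm z
          _ = (∑ z, e z x / Se x) * ε' + n * K := by
              rw [Finset.sum_add_distrib, ← Finset.sum_mul, Finset.sum_const,
                Finset.card_univ, Fintype.card_fin, nsmul_eq_mul]
          _ = ε' + n * K := by rw [hsum1, one_mul]
      have hfinal : ε' + (n:ℝ) * K = ε / (2 * q) := by
        rw [hε'def, hKdef, hsdef]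
        exact aux_final ε δ M n q hε hδ hM0 hnR hqR
      rw [hfinal] at hbound
      exact hbound
    haveI : Nonempty 𝕏 := hXne.to_subtype
    have hsup : ∀ j : Fin q, (⨆ x : 𝕏, |m x j - u x j|) ≤ ε / (2 * q) := fun j =>
      ciSup_le fun x => key j x x.2
    calc (∑ j : Fin q, ⨆ x : 𝕏, |m x j - u x j|) ≤ ∑ _j : Fin q, ε / (2 * q) :=
          Finset.sum_le_sum fun j _ => hsup j
      _ = (q:ℝ) * (ε / (2 * q)) := by
          rw [Finset.sum_const, Finset.card_univ, Fintype.card_fin, nsmul_eq_mul]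
      _ = ε / 2 := by
          field_simp [hqR.ne']
      _ < ε := by linarith
end

section
/- Let 𝕏 ⊂ ℝ^p be compact. For every continuous function u: 𝕏 → ℝ and every ε > 0, there exist n ∈ ℕ, weights π_z > 0 summing to 1, means μ_z ∈ ℝ^p, symmetric positive-definite matrices Σ_z, and scalars a_z ∈ ℝ such that sup_{x∈𝕏} |u(x) − Σ_{z=1}^{n} [π_z φ_p(x; μ_z, Σ_z)/Σ_ζ π_ζ φ_p(x; μ_ζ, Σ_ζ)]·a_z| < ε. -/
open scoped Matrix BigOperators

open Matrix

private lemma expsum_pos {p n : ℕ} (hn : 0 < n) {d : Fin n → ℝ} (hd : ∀ z, 0 < d z)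
    (μ : Fin n → Fin p → ℝ) (x : Fin p → ℝ) :
    0 < ∑ z, d z * Real.exp (x ⬝ᵥ μ z) := by
  haveI : Nonempty (Fin n) := ⟨⟨0, hn⟩⟩
  exact Finset.sum_pos (fun z _ => mul_pos (hd z) (Real.exp_pos _)) Finset.univ_nonempty

private lemma expsum_mul {p n m : ℕ} (b : Fin n → ℝ) (b' : Fin m → ℝ)
    (μ : Fin n → Fin p → ℝ) (μ' : Fin m → Fin p → ℝ) (x : Fin p → ℝ) :
    (∑ k : Fin (n * m), (b (finProdFinEquiv.symm k).1 * b' (finProdFinEquiv.symm k).2) *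
        Real.exp (x ⬝ᵥ (μ (finProdFinEquiv.symm k).1 + μ' (finProdFinEquiv.symm k).2)))
      = (∑ i, b i * Real.exp (x ⬝ᵥ μ i)) * (∑ j, b' j * Real.exp (x ⬝ᵥ μ' j)) := by
  rw [← Equiv.sum_comp (finProdFinEquiv : Fin n × Fin m ≃ Fin (n * m))]
  simp only [Equiv.symm_apply_apply]
  rw [Fintype.sum_prod_type, Finset.sum_mul_sum]
  refine Finset.sum_congr rfl fun i _ => Finset.sum_congr rfl fun j _ => ?_
  rw [dotProduct_add, Real.exp_add]; ring

/-- The subalgebra of ratios of exponential sums with positive denominator coefficients. -/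
noncomputable def rbfAlg {p : ℕ} (𝕏 : Set (Fin p → ℝ)) : Subalgebra ℝ C(𝕏, ℝ) where
  carrier := {g | ∃ (n : ℕ) (b d : Fin n → ℝ) (μ : Fin n → Fin p → ℝ),
    0 < n ∧ (∀ z, 0 < d z) ∧ ∀ x : 𝕏,
      g x = (∑ z, b z * Real.exp ((x : Fin p → ℝ) ⬝ᵥ μ z)) /
            (∑ z, d z * Real.exp ((x : Fin p → ℝ) ⬝ᵥ μ z))}
  mul_mem' := by
    rintro g₁ g₂ ⟨n, b, d, μ, hn, hd, h₁⟩ ⟨m, b', d', μ', hm, hd', h₂⟩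
    refine ⟨n * m, fun k => b (finProdFinEquiv.symm k).1 * b' (finProdFinEquiv.symm k).2,
      fun k => d (finProdFinEquiv.symm k).1 * d' (finProdFinEquiv.symm k).2,
      fun k => μ (finProdFinEquiv.symm k).1 + μ' (finProdFinEquiv.symm k).2,
      Nat.mul_pos hn hm, fun k => mul_pos (hd _) (hd' _), fun x => ?_⟩
    rw [expsum_mul, expsum_mul, ContinuousMap.mul_apply, h₁ x, h₂ x, div_mul_div_comm]
  one_mem' := by
    refine ⟨1, fun _ => 1, fun _ => 1, fun _ => 0, one_pos, fun _ => one_pos, fun x => ?_⟩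
    simp
  add_mem' := by
    rintro g₁ g₂ ⟨n, b, d, μ, hn, hd, h₁⟩ ⟨m, b', d', μ', hm, hd', h₂⟩
    refine ⟨n * m,
      fun k => b (finProdFinEquiv.symm k).1 * d' (finProdFinEquiv.symm k).2
        + d (finProdFinEquiv.symm k).1 * b' (finProdFinEquiv.symm k).2,
      fun k => d (finProdFinEquiv.symm k).1 * d' (finProdFinEquiv.symm k).2,
      fun k => μ (finProdFinEquiv.symm k).1 + μ' (finProdFinEquiv.symm k).2,
      Nat.mul_pos hn hm, fun k => mul_pos (hd _) (hd' _), fun x => ?_⟩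
    have hD₁ := expsum_pos hn hd μ (x : Fin p → ℝ)
    have hD₂ := expsum_pos hm hd' μ' (x : Fin p → ℝ)
    rw [ContinuousMap.add_apply, h₁ x, h₂ x, div_add_div _ _ hD₁.ne' hD₂.ne']
    rw [expsum_mul, ← expsum_mul b d' μ μ', ← expsum_mul d b' μ μ', ← Finset.sum_add_distrib]
    congr 1
    refine Finset.sum_congr rfl fun k _ => ?_
    ring
  zero_mem' := by
    refine ⟨1, fun _ => 0, fun _ => 1, fun _ => 0, one_pos, fun _ => one_pos, fun x => ?_⟩
    simp
  algebraMap_mem' := by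
    intro r
    refine ⟨1, fun _ => r, fun _ => 1, fun _ => 0, one_pos, fun _ => one_pos, fun x => ?_⟩
    simp

private lemma sigmoid_inj : Function.Injective fun t : ℝ => Real.exp t / (Real.exp t + 1) := by
  intro s t h
  have hs : Real.exp s + 1 ≠ 0 := by positivity
  have ht : Real.exp t + 1 ≠ 0 := by positivity
  rw [div_eq_div_iff hs ht] at h
  have : Real.exp s = Real.exp t := by nlinarith
  exact Real.exp_injective this

private lemma rbfAlg_separates {p : ℕ} (𝕏 : Set (Fin p → ℝ)) :
    (rbfAlg 𝕏).SeparatesPoints := by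
  intro x y hxy
  set v : Fin p → ℝ := (x : Fin p → ℝ) - (y : Fin p → ℝ) with hv
  have hvne : v ≠ 0 := sub_ne_zero.mpr (fun h => hxy (Subtype.ext h))
  have hcont : Continuous fun z : 𝕏 => Real.exp ((z : Fin p → ℝ) ⬝ᵥ v) /
      (Real.exp ((z : Fin p → ℝ) ⬝ᵥ v) + 1) := by
    have hdp : Continuous fun z : 𝕏 => (z : Fin p → ℝ) ⬝ᵥ v := by
      simp only [dotProduct]
      exact continuous_finset_sum _ fun i _ =>
        ((continuous_apply i).comp continuous_subtype_val).mul continuous_const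
    exact (Real.continuous_exp.comp hdp).div
      ((Real.continuous_exp.comp hdp).add continuous_const)
      (fun z => by positivity)
  refine ⟨fun z : 𝕏 => Real.exp ((z : Fin p → ℝ) ⬝ᵥ v) /
      (Real.exp ((z : Fin p → ℝ) ⬝ᵥ v) + 1), ⟨⟨⟨_, hcont⟩, ?_, rfl⟩, ?_⟩⟩
  · refine ⟨2, ![1, 0], ![1, 1], ![v, 0], two_pos, fun z => by fin_cases z <;> simp, fun z => ?_⟩
    simp [Fin.sum_univ_two]
  · intro h
    have hne : (x : Fin p → ℝ) ⬝ᵥ v ≠ (y : Fin p → ℝ) ⬝ᵥ v := by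
      intro hc
      have : v ⬝ᵥ v = 0 := by
        rw [hv, sub_dotProduct] at *
        linarith [hc]
      exact hvne (dotProduct_self_eq_zero.mp this)
    exact hne (sigmoid_inj h)

private lemma gaussPDF_one {p : ℕ} (μ x : Fin p → ℝ) :
    gaussPDF μ (1 : Matrix (Fin p) (Fin p) ℝ) x =
      (Real.sqrt ((2 * Real.pi) ^ p))⁻¹ *
        (Real.exp (-(1 / 2) * (x ⬝ᵥ x)) *
          (Real.exp (x ⬝ᵥ μ) * Real.exp (-(1 / 2) * (μ ⬝ᵥ μ)))) := by
  unfold gaussPDF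
  rw [Matrix.det_one, inv_one, Matrix.one_mulVec, mul_one]
  have hq : (x - μ) ⬝ᵥ (x - μ) = x ⬝ᵥ x - 2 * (x ⬝ᵥ μ) + μ ⬝ᵥ μ := by
    rw [dotProduct_sub, sub_dotProduct, sub_dotProduct, dotProduct_comm μ x]
    ring
  rw [hq, Fintype.card_fin, ← Real.exp_add, ← Real.exp_add]
  congr 1
  ring_nf

theorem normalized_gaussian_rbf_dense {p : ℕ}
    (𝕏 : Set (Fin p → ℝ)) (hX : IsCompact 𝕏) (hXne : 𝕏.Nonempty)
    (u : (Fin p → ℝ) → ℝ) (hu : ContinuousOn u 𝕏) (ε : ℝ) (hε : 0 < ε) :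
    ∃ (n : ℕ) (π : Fin n → ℝ) (μ : Fin n → Fin p → ℝ)
      (S : Fin n → Matrix (Fin p) (Fin p) ℝ) (a : Fin n → ℝ),
      0 < n ∧ (∀ z, 0 < π z) ∧ (∑ z, π z = 1) ∧ (∀ z, (S z).PosDef) ∧
      (⨆ x : 𝕏, |u x - ∑ z, ((π z * gaussPDF (μ z) (S z) x) /
          (∑ ζ, π ζ * gaussPDF (μ ζ) (S ζ) x)) * a z|) < ε := by
  haveI : CompactSpace 𝕏 := isCompact_iff_compactSpace.mp hX
  haveI : Nonempty 𝕏 := hXne.to_subtype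
  set f : C(𝕏, ℝ) := ⟨𝕏.restrict u, hu.restrict⟩ with hf
  obtain ⟨⟨g, hgA⟩, hg⟩ :=
    ContinuousMap.exists_mem_subalgebra_near_continuousMap_of_separatesPoints
      (rbfAlg 𝕏) (rbfAlg_separates 𝕏) f ε hε
  obtain ⟨n, b, d, μ, hn, hd, hrep⟩ := hgA
  set σ : ℝ := ∑ z, d z * Real.exp (1 / 2 * (μ z ⬝ᵥ μ z)) with hσdef
  haveI : Nonempty (Fin n) := ⟨⟨0, hn⟩⟩
  have hσ : 0 < σ :=
    Finset.sum_pos (fun z _ => mul_pos (hd z) (Real.exp_pos _)) Finset.univ_nonempty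
  set π : Fin n → ℝ := fun z => d z * Real.exp (1 / 2 * (μ z ⬝ᵥ μ z)) / σ with hπdef
  set a : Fin n → ℝ := fun z => b z / d z with hadef
  refine ⟨n, π, μ, fun _ => 1, a, hn, fun z => div_pos (mul_pos (hd z) (Real.exp_pos _)) hσ,
    by rw [hπdef, ← Finset.sum_div, ← hσdef, div_self hσ.ne'], fun _ => Matrix.PosDef.one, ?_⟩
  set c : ℝ := (Real.sqrt ((2 * Real.pi) ^ p))⁻¹ with hcdef
  have hc : 0 < c := by
    rw [hcdef]
    exact inv_pos.mpr (Real.sqrt_pos.mpr (by positivity))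
  have hterm : ∀ (z : Fin n) (y : Fin p → ℝ),
      π z * gaussPDF (μ z) 1 y =
        (c * Real.exp (-(1 / 2) * (y ⬝ᵥ y)) / σ) * (d z * Real.exp (y ⬝ᵥ μ z)) := by
    intro z y
    rw [gaussPDF_one, hπdef, hcdef]
    rw [show -(1 / 2 : ℝ) * (μ z ⬝ᵥ μ z) = -(1 / 2 * (μ z ⬝ᵥ μ z)) by ring, Real.exp_neg]
    have he : Real.exp (1 / 2 * (μ z ⬝ᵥ μ z)) ≠ 0 := Real.exp_ne_zero _
    field_simp
  have hnet : ∀ x : 𝕏,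
      (∑ z, ((π z * gaussPDF (μ z) 1 (x : Fin p → ℝ)) /
        (∑ ζ, π ζ * gaussPDF (μ ζ) 1 (x : Fin p → ℝ))) * a z) = g x := by
    intro x
    set y : Fin p → ℝ := (x : Fin p → ℝ)
    set K : ℝ := c * Real.exp (-(1 / 2) * (y ⬝ᵥ y)) / σ with hKdef
    have hK : 0 < K := div_pos (mul_pos hc (Real.exp_pos _)) hσ
    have hDsum : (∑ ζ, π ζ * gaussPDF (μ ζ) 1 y) = K * ∑ ζ, d ζ * Real.exp (y ⬝ᵥ μ ζ) := by
      rw [Finset.mul_sum]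
      exact Finset.sum_congr rfl fun ζ _ => hterm ζ y
    have hD : 0 < ∑ ζ, d ζ * Real.exp (y ⬝ᵥ μ ζ) := expsum_pos hn hd μ y
    calc (∑ z, ((π z * gaussPDF (μ z) 1 y) / (∑ ζ, π ζ * gaussPDF (μ ζ) 1 y)) * a z)
        = ∑ z, (b z * Real.exp (y ⬝ᵥ μ z)) / (∑ ζ, d ζ * Real.exp (y ⬝ᵥ μ ζ)) := by
          refine Finset.sum_congr rfl fun z _ => ?_
          rw [hterm z y, hDsum, mul_div_mul_left _ _ hK.ne', hadef]
          rw [div_mul_div_comm, div_eq_div_iff (mul_ne_zero hD.ne' (hd z).ne') hD.ne']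
          ring
      _ = (∑ z, b z * Real.exp (y ⬝ᵥ μ z)) / (∑ ζ, d ζ * Real.exp (y ⬝ᵥ μ ζ)) :=
          (Finset.sum_div _ _ _).symm
      _ = g x := (hrep x).symm
  refine lt_of_le_of_lt (ciSup_le fun x => ?_) hg
  have hx : u x - ∑ z, ((π z * gaussPDF (μ z) 1 (x : Fin p → ℝ)) /
      (∑ ζ, π ζ * gaussPDF (μ ζ) 1 (x : Fin p → ℝ))) * a z = -((g - f) x) := by
    rw [hnet x, ContinuousMap.sub_apply]
    show u ↑x - g x = -(g x - u ↑x)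
    ring
  rw [hx, abs_neg]
  exact ContinuousMap.norm_coe_le_norm (g - f) x
end
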